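/- Let S be a finite set of sporadic tasks partitioned into S₁ and S₂, where every τᵢ = (Cᵢ, Tᵢ, Dᵢ) in S₁ has Dᵢ = 1 < Tᵢ, every τᵢ in S₂ has Dᵢ = Tᵢ = H, and H is a common positive integer multiple of all Tᵢ for τᵢ ∈ S₁ (each Tᵢ rational). If Σ_{τᵢ∈S₁} Cᵢ ≤ 1 and Σ_{τᵢ∈S} Cᵢ/Tᵢ ≤ 1, then for every t with 0 ≤ t ≤ H, Σ_{τᵢ∈S} dbf(τᵢ, t) ≤ t. -/

import Mathlib

/-- Demand bound function of a sporadic task (C, T, D) at time t. -/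
noncomputable def dbf (C T D t : ℝ) : ℝ := ((max 0 (⌊(t - D) / T⌋ + 1) : ℤ) : ℝ) * C

theorem demand_le_on_interval {ι : Type*} [DecidableEq ι] (S S₁ S₂ : Finset ι)
    (C T D : ι → ℝ) (H : ℝ)
    (hpart : S₁ ∪ S₂ = S) (hdisj : Disjoint S₁ S₂)
    (hpos : ∀ i ∈ S, 0 < C i ∧ 0 < T i ∧ 0 < D i)
    (hS₁ : ∀ i ∈ S₁, D i = 1 ∧ 1 < T i)
    (hS₂ : ∀ i ∈ S₂, D i = H ∧ T i = H)
    (hT₁rat : ∀ i ∈ S₁, ∃ q : ℚ, (T i : ℝ) = (q : ℝ))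
    (hmul : ∀ i ∈ S₁, ∃ k : ℕ, 1 ≤ k ∧ H = k * T i)
    (hHpos : 0 < H)
    (hdens : ∑ i ∈ S₁, C i ≤ 1)
    (hutil : ∑ i ∈ S, C i / T i ≤ 1) :
    ∀ t : ℝ, 0 ≤ t → t ≤ H → ∑ i ∈ S, dbf (C i) (T i) (D i) t ≤ t := by
  have hS₁sub : S₁ ⊆ S := by rw [← hpart]; exact Finset.subset_union_left
  have hutil₁ : ∑ i ∈ S₁, C i / T i ≤ 1 := by
    refine le_trans (Finset.sum_le_sum_of_subset_of_nonneg hS₁sub ?_) hutil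
    intro i hi _
    obtain ⟨hC, hT, _⟩ := hpos i hi
    positivity
  intro t ht0 htH
  rcases eq_or_lt_of_le htH with heq | hlt
  · -- t = H
    have key : ∀ i ∈ S, dbf (C i) (T i) (D i) t = t * (C i / T i) := by
      intro i hi
      have hi' : i ∈ S₁ ∪ S₂ := by rw [hpart]; exact hi
      obtain ⟨hC, hT, hD⟩ := hpos i hi
      have hTne : T i ≠ 0 := ne_of_gt hT
      rcases Finset.mem_union.mp hi' with h1 | h2
      · obtain ⟨hD1, hT1⟩ := hS₁ i h1
        obtain ⟨k, hk1, hkH⟩ := hmul i h1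
        have hk1' : (1:ℝ) ≤ (k:ℝ) := by exact_mod_cast hk1
        have hxeq : (t - D i) / T i = (k:ℝ) - 1 / T i := by
          rw [heq, hkH, hD1]; field_simp
        have h1T : 0 < 1 / T i := by positivity
        have h1T' : 1 / T i < 1 := by
          rw [div_lt_one hT]; exact hT1
        have hfloor : ⌊(t - D i) / T i⌋ = (k:ℤ) - 1 := by
          rw [hxeq, Int.floor_eq_iff]
          constructor
          · push_cast; linarith
          · push_cast; linarith
        unfold dbf
        rw [hfloor]
        have hmax : max 0 ((k:ℤ) - 1 + 1) = (k:ℤ) := by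
          simp only [sub_add_cancel]
          exact max_eq_right (by exact_mod_cast Nat.zero_le k)
        rw [hmax, heq, hkH]
        push_cast
        field_simp
      · obtain ⟨hD2, hT2⟩ := hS₂ i h2
        have hxeq : (t - D i) / T i = 0 := by
          rw [heq, hD2, hT2]; simp
        unfold dbf
        rw [hxeq]
        norm_num
        rw [heq, hT2]
        field_simp
    calc ∑ i ∈ S, dbf (C i) (T i) (D i) t
        = ∑ i ∈ S, t * (C i / T i) := Finset.sum_congr rfl key
      _ = t * ∑ i ∈ S, C i / T i := by rw [Finset.mul_sum]
      _ ≤ t * 1 := by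
          apply mul_le_mul_of_nonneg_left hutil ht0
      _ = t := mul_one t
  · -- t < H
    rw [← hpart, Finset.sum_union hdisj]
    have hS2zero : ∑ i ∈ S₂, dbf (C i) (T i) (D i) t = 0 := by
      apply Finset.sum_eq_zero
      intro i hi
      obtain ⟨hD2, hT2⟩ := hS₂ i hi
      have hx : (t - D i) / T i < 0 := by
        apply div_neg_of_neg_of_pos
        · rw [hD2]; linarith
        · rw [hT2]; exact hHpos
      have hfl : ⌊(t - D i) / T i⌋ < 0 := Int.floor_lt.mpr (by exact_mod_cast hx)
      unfold dbf
      have hmax : max 0 (⌊(t - D i) / T i⌋ + 1) = 0 := by omega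
      rw [hmax]
      simp
    rw [hS2zero, add_zero]
    by_cases ht1 : t < 1
    · have hS1zero : ∑ i ∈ S₁, dbf (C i) (T i) (D i) t = 0 := by
        apply Finset.sum_eq_zero
        intro i hi
        obtain ⟨hD1, hT1⟩ := hS₁ i hi
        have hx : (t - D i) / T i < 0 := by
          apply div_neg_of_neg_of_pos
          · rw [hD1]; linarith
          · linarith
        have hfl : ⌊(t - D i) / T i⌋ < 0 := Int.floor_lt.mpr (by exact_mod_cast hx)
        unfold dbf
        have hmax : max 0 (⌊(t - D i) / T i⌋ + 1) = 0 := by omega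
        rw [hmax]
        simp
      rw [hS1zero]; exact ht0
    · push_neg at ht1
      have hterm : ∀ i ∈ S₁, dbf (C i) (T i) (D i) t ≤ C i + (t - 1) * (C i / T i) := by
        intro i hi
        obtain ⟨hC, hT, hD⟩ := hpos i (hS₁sub hi)
        obtain ⟨hD1, hT1⟩ := hS₁ i hi
        have hx0 : 0 ≤ (t - D i) / T i := by
          apply div_nonneg
          · rw [hD1]; linarith
          · linarith
        have hb : ((max 0 (⌊(t - D i) / T i⌋ + 1) : ℤ) : ℝ) ≤ (t - D i) / T i + 1 := by
          push_cast
          apply max_le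
          · linarith
          · have := Int.floor_le ((t - D i) / T i)
            linarith
        unfold dbf
        have := mul_le_mul_of_nonneg_right hb (le_of_lt hC)
        calc ((max 0 (⌊(t - D i) / T i⌋ + 1) : ℤ) : ℝ) * C i
            ≤ ((t - D i) / T i + 1) * C i := this
          _ = C i + (t - 1) * (C i / T i) := by rw [hD1]; field_simp; ring
      calc ∑ i ∈ S₁, dbf (C i) (T i) (D i) t
          ≤ ∑ i ∈ S₁, (C i + (t - 1) * (C i / T i)) := Finset.sum_le_sum hterm
        _ = (∑ i ∈ S₁, C i) + (t - 1) * ∑ i ∈ S₁, C i / T i := by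
            rw [Finset.sum_add_distrib, Finset.mul_sum]
        _ ≤ 1 + (t - 1) * 1 := by
            have h1 : (t - 1) * ∑ i ∈ S₁, C i / T i ≤ (t - 1) * 1 :=
              mul_le_mul_of_nonneg_left hutil₁ (by linarith)
            linarith
        _ = t := by ring
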